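/- Let V be a linear subspace of ℝ^n of dimension at most ℓ. Then the number of vectors in V all of whose coordinates are ±1 is at most 2^ℓ. -/

import Mathlib

open Module Set

theorem stmt_0 {n ℓ : ℕ} (V : Submodule ℝ (Fin n → ℝ))
    (hV : Module.finrank ℝ V ≤ ℓ) :
    {x : Fin n → ℝ | x ∈ V ∧ ∀ i, x i = 1 ∨ x i = -1}.ncard ≤ 2 ^ ℓ := by
  classical
  set f : Fin n → Module.Dual ℝ V := fun i => (LinearMap.proj i).comp V.subtype with hf
  obtain ⟨b, hbsub, hbspan, hbind⟩ := exists_linearIndependent ℝ (Set.range f)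
  have hbfin : b.Finite := hbind.setFinite
  haveI := hbfin.fintype
  have hbcard : Fintype.card b ≤ ℓ := by
    refine le_trans ?_ hV
    have := hbind.fintype_card_le_finrank
    rwa [Subspace.dual_finrank_eq] at this
  -- choice of indices
  have hchoice : ∀ φ : b, ∃ i : Fin n, f i = (φ : Module.Dual ℝ V) := fun φ => hbsub φ.2
  choose g hg using hchoice
  -- key: if x ∈ V and φ x = 0 for all φ ∈ b then x = 0
  have key : ∀ x : V, (∀ φ : b, (φ : Module.Dual ℝ V) x = 0) → x = 0 := by
    intro x hx
    have hker : b ⊆ (LinearMap.ker ((LinearMap.applyₗ x : Module.Dual ℝ V →ₗ[ℝ] ℝ)) : Set (Module.Dual ℝ V)) := by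
      intro φ hφ
      exact hx ⟨φ, hφ⟩
    have hspan : Submodule.span ℝ (Set.range f) ≤ LinearMap.ker (LinearMap.applyₗ x) := by
      rw [← hbspan]
      exact Submodule.span_le.mpr hker
    have : ∀ i, f i x = 0 := by
      intro i
      exact hspan (Submodule.subset_span ⟨i, rfl⟩)
    ext i
    exact this i
  -- injection into b → Bool
  set S := {x : Fin n → ℝ | x ∈ V ∧ ∀ i, x i = 1 ∨ x i = -1}
  have hinj : Set.InjOn (fun x : Fin n → ℝ => fun φ : b => decide (x (g φ) = 1)) S := by
    intro x hx y hy hxy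
    have hxy' : ∀ φ : b, x (g φ) = y (g φ) := by
      intro φ
      have := congrFun hxy φ
      simp only [decide_eq_decide] at this
      rcases hx.2 (g φ) with h1 | h1 <;> rcases hy.2 (g φ) with h2 | h2 <;>
        simp [h1, h2] at this ⊢ <;> norm_num [h1, h2] at this
    have hsub : (⟨x, hx.1⟩ - ⟨y, hy.1⟩ : V) = 0 := by
      apply key
      intro φ
      rw [← hg φ]
      simp [f, hxy' φ]
    have := sub_eq_zero.mp hsub
    exact congrArg Subtype.val (sub_eq_zero.mp hsub)
  have hle : S.ncard ≤ Nat.card (b → Bool) := by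
    have := Set.ncard_le_ncard_of_injOn _ (fun x _ => Set.mem_univ _) hinj (Set.finite_univ)
    simpa [Set.ncard_univ] using this
  refine hle.trans ?_
  rw [Nat.card_eq_fintype_card, Fintype.card_fun]
  calc Fintype.card Bool ^ Fintype.card b = 2 ^ Fintype.card b := by simp
    _ ≤ 2 ^ ℓ := Nat.pow_le_pow_right (by norm_num) hbcard
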